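/- Let H be a real inner product space, let Y_1,…,Y_n ∈ H, let Ȳ ∈ H be a fixed element, and let 1 ≤ p < n. Define the linear operator K̂ on H by K̂x = (n−p)^{−2} Σ_{k=1}^p Σ_{t,s=1}^{n−p} ⟨Y_{t+k}−Ȳ, Y_{s+k}−Ȳ⟩ ⟨Y_s−Ȳ, x⟩ (Y_t−Ȳ), and define the (n−p)×(n−p) real matrix K* = (n−p)^{−2} Σ_{k=1}^p A_k A_0, where (A_k)_{ts} = ⟨Y_{t+k}−Ȳ, Y_{s+k}−Ȳ⟩ for k = 0,1,…,p. If γ = (γ_1,…,γ_{n−p})ᵀ is an eigenvector of K* with eigenvalue θ̂, then the element ψ̂ = Σ_{t=1}^{n−p} γ_t (Y_t−Ȳ) satisfies K̂ψ̂ = θ̂ ψ̂. Consequently every nonzero eigenvalue of K* is a nonzero eigenvalue of K̂. -/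

import Mathlib

open scoped RealInnerProductSpace

/-- **Proposition 2** (duality between the sample operator `K̂` on `H` and the
finite matrix `K*`).  Curves are `Y 1, …, Y n` (the values of `Y : ℕ → H` at
indices `1,…,n`), `Ȳ` is a fixed element of `H`, and `1 ≤ p < n`. -/
theorem stmt3
    {H : Type*} [NormedAddCommGroup H] [InnerProductSpace ℝ H]
    (n p : ℕ) (hp : 1 ≤ p) (hpn : p < n)
    (Y : ℕ → H) (Ybar : H)
    -- the matrices A_k, k = 0, 1, …, p, with (A_k)_{ts} = ⟪Y_{t+k} − Ȳ, Y_{s+k} − Ȳ⟫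
    (A : ℕ → Matrix (Fin (n - p)) (Fin (n - p)) ℝ)
    (hA : ∀ k, k ≤ p → ∀ t s : Fin (n - p),
      A k t s = ⟪Y (t.val + 1 + k) - Ybar, Y (s.val + 1 + k) - Ybar⟫)
    -- the matrix K* = (n−p)^{−2} Σ_{k=1}^p A_k A_0
    (Kstar : Matrix (Fin (n - p)) (Fin (n - p)) ℝ)
    (hKstar : Kstar = (((n - p : ℕ) : ℝ) ^ 2)⁻¹ • ∑ k ∈ Finset.Icc 1 p, A k * A 0)
    -- the operator K̂ on H
    (Khat : H → H)
    (hKhat : ∀ x : H, Khat x = (((n - p : ℕ) : ℝ) ^ 2)⁻¹ •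
      ∑ k ∈ Finset.Icc 1 p, ∑ t : Fin (n - p), ∑ s : Fin (n - p),
        (⟪Y (t.val + 1 + k) - Ybar, Y (s.val + 1 + k) - Ybar⟫ *
          ⟪Y (s.val + 1) - Ybar, x⟫) • (Y (t.val + 1) - Ybar)) :
    -- if γ is an eigenvector of K* with eigenvalue θ̂, then ψ̂ = Σ_t γ_t (Y_t − Ȳ)
    -- satisfies K̂ ψ̂ = θ̂ ψ̂
    (∀ (θhat : ℝ) (γ : Fin (n - p) → ℝ), Kstar.mulVec γ = θhat • γ →
      Khat (∑ t : Fin (n - p), γ t • (Y (t.val + 1) - Ybar)) =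
        θhat • (∑ t : Fin (n - p), γ t • (Y (t.val + 1) - Ybar))) ∧
    -- consequently, every nonzero eigenvalue of K* is a nonzero eigenvalue of K̂
    (∀ θhat : ℝ, θhat ≠ 0 →
      (∃ γ : Fin (n - p) → ℝ, γ ≠ 0 ∧ Kstar.mulVec γ = θhat • γ) →
      ∃ v : H, v ≠ 0 ∧ Khat v = θhat • v) := by
  set c : ℝ := (((n - p : ℕ) : ℝ) ^ 2)⁻¹ with hc
  -- ψ-builder
  set e : Fin (n - p) → H := fun t => Y (t.val + 1) - Ybar with he
  have h0 : ∀ (γ : Fin (n - p) → ℝ) (s : Fin (n - p)),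
      (⟪Y (s.val + 1) - Ybar, ∑ u : Fin (n - p), γ u • e u⟫ : ℝ)
        = (A 0).mulVec γ s := by
    intro γ s
    rw [inner_sum]
    simp only [Matrix.mulVec, dotProduct, real_inner_smul_right, he]
    refine Finset.sum_congr rfl fun u _ => ?_
    rw [hA 0 (Nat.zero_le p) s u]
    ring_nf
  have key : ∀ γ : Fin (n - p) → ℝ,
      Khat (∑ t : Fin (n - p), γ t • e t)
        = ∑ t : Fin (n - p), (Kstar.mulVec γ) t • e t := by
    intro γ
    rw [hKhat]
    have step1 : ∀ k ∈ Finset.Icc 1 p,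
        (∑ t : Fin (n - p), ∑ s : Fin (n - p),
          ((⟪Y (t.val + 1 + k) - Ybar, Y (s.val + 1 + k) - Ybar⟫ : ℝ) *
            ⟪Y (s.val + 1) - Ybar, ∑ u : Fin (n - p), γ u • e u⟫) • (Y (t.val + 1) - Ybar))
          = ∑ t : Fin (n - p), (((A k * A 0).mulVec γ) t) • e t := by
      intro k hk
      refine Finset.sum_congr rfl fun t _ => ?_
      rw [← Finset.sum_smul]
      congr 1
      rw [← Matrix.mulVec_mulVec]
      simp only [Matrix.mulVec, dotProduct]
      refine Finset.sum_congr rfl fun s _ => ?_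
      rw [h0 γ s, hA k (Finset.mem_Icc.mp hk).2 t s]
      simp [Matrix.mulVec, dotProduct]
    calc c • ∑ k ∈ Finset.Icc 1 p, ∑ t : Fin (n - p), ∑ s : Fin (n - p),
          ((⟪Y (t.val + 1 + k) - Ybar, Y (s.val + 1 + k) - Ybar⟫ : ℝ) *
            ⟪Y (s.val + 1) - Ybar, ∑ u : Fin (n - p), γ u • e u⟫) • (Y (t.val + 1) - Ybar)
        = c • ∑ k ∈ Finset.Icc 1 p, ∑ t : Fin (n - p), (((A k * A 0).mulVec γ) t) • e t := by
          rw [Finset.sum_congr rfl step1]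
      _ = ∑ t : Fin (n - p), (Kstar.mulVec γ) t • e t := by
          rw [Finset.sum_comm, Finset.smul_sum]
          refine Finset.sum_congr rfl fun t _ => ?_
          rw [hKstar, Matrix.smul_mulVec]
          rw [← Finset.sum_smul, smul_smul]
          congr 1
          simp only [Pi.smul_apply, smul_eq_mul, Matrix.mulVec, dotProduct,
            Matrix.sum_apply, Finset.sum_mul]
          rw [Finset.sum_comm]
  constructor
  · intro θhat γ heig
    rw [key γ, heig]
    rw [Finset.smul_sum]
    refine Finset.sum_congr rfl fun t _ => ?_
    simp [smul_smul, he]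
  · rintro θhat hθ ⟨γ, hγ, heig⟩
    refine ⟨∑ t : Fin (n - p), γ t • e t, ?_, ?_⟩
    · intro hpsi
      apply hγ
      have hA0 : (A 0).mulVec γ = 0 := by
        funext s
        rw [Pi.zero_apply, ← h0 γ s, hpsi, inner_zero_right]
      have hK0 : Kstar.mulVec γ = 0 := by
        rw [hKstar, Matrix.smul_mulVec]
        have : (∑ k ∈ Finset.Icc 1 p, A k * A 0).mulVec γ = 0 := by
          have : ∀ k ∈ Finset.Icc 1 p, (A k * A 0).mulVec γ = 0 := by
            intro k hk
            rw [← Matrix.mulVec_mulVec, hA0, Matrix.mulVec_zero]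
          funext t
          simp only [Matrix.mulVec, dotProduct, Matrix.sum_apply, Finset.sum_mul]
          rw [Finset.sum_comm]
          refine Finset.sum_eq_zero fun k hk => ?_
          have := congrFun (this k hk) t
          simpa [Matrix.mulVec, dotProduct] using this
        rw [this, smul_zero]
      rw [hK0] at heig
      funext t
      have := congrFun heig t
      simp only [Pi.zero_apply, Pi.smul_apply, smul_eq_mul] at this
      exact (mul_eq_zero.mp this.symm).resolve_left hθ
    · rw [key γ, heig, Finset.smul_sum]
      refine Finset.sum_congr rfl fun t _ => ?_
      simp [smul_smul]
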